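/- Let 0 < α < 1 and n ≥ 1. For every s > 0 and every ε > 0 there exist finite types X₁, …, Xₙ and a probability distribution P on X₁ × ⋯ × Xₙ such that |H_α(P_{[n]}) − s| ≤ ε and H_α(P_I) ≤ ε for every nonempty proper subset I ⊊ [n]. (Moreover the construction is classical, i.e. realized by a probability distribution.) -/

import Mathlib

noncomputable section

/-- A probability distribution on a finite type. -/
def IsProbDist {X : Type*} [Fintype X] (P : X → ℝ) : Prop :=
  (∀ x, 0 ≤ P x) ∧ ∑ x, P x = 1

/-- Marginal of a distribution on a finite product, on the coordinates in `I`. -/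
def marginal {n : ℕ} {X : Fin n → Type*} [∀ i, Fintype (X i)]
    (P : (∀ i, X i) → ℝ) (I : Finset (Fin n)) :
    (∀ i : {i : Fin n // i ∈ I}, X i.1) → ℝ :=
  fun x => ∑ y : ∀ j : {j : Fin n // j ∉ I}, X j.1,
    P (fun i => if h : i ∈ I then x ⟨i, h⟩ else y ⟨i, h⟩)

/-- Rényi α-entropy (base 2) of a distribution. -/
def renyiH {X : Type*} [Fintype X] (α : ℝ) (P : X → ℝ) : ℝ :=
  (1 / (1 - α)) * Real.logb 2 (∑ x, P x ^ α)

lemma aux_le_rpow {p α : ℝ} (hp0 : 0 ≤ p) (hp1 : p ≤ 1) (hα0 : 0 < α) (hα1 : α ≤ 1) :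
    p ≤ p ^ α := by
  rcases eq_or_lt_of_le hp0 with h | h
  · rw [← h, Real.zero_rpow hα0.ne']
  · calc p = p ^ (1:ℝ) := (Real.rpow_one p).symm
      _ ≤ p ^ α := Real.rpow_le_rpow_of_exponent_ge h hp1 hα1

lemma powsum {X : Type*} [Fintype X] [DecidableEq X] (x₀ : X) (N : ℕ)
    (hN : Fintype.card X = N) (δ α : ℝ) :
    ∑ x : X, (δ / (N : ℝ) + (1 - δ) * (if x = x₀ then 1 else 0)) ^ α
    = ((N : ℝ) - 1) * (δ / (N : ℝ)) ^ α + (δ / (N : ℝ) + (1 - δ)) ^ α := by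
  haveI : Nonempty X := ⟨x₀⟩
  subst hN
  rw [Finset.sum_eq_sum_sdiff_singleton_add (Finset.mem_univ x₀)]
  have h1 : ∀ x ∈ Finset.univ \ {x₀},
      (δ / (Fintype.card X : ℝ) + (1 - δ) * (if x = x₀ then 1 else 0)) ^ α
      = (δ / (Fintype.card X : ℝ)) ^ α := by
    intro x hx
    rw [Finset.mem_sdiff, Finset.mem_singleton] at hx
    simp [hx.2]
  rw [Finset.sum_congr rfl h1, Finset.sum_const, Finset.card_univ_diff,
    Finset.card_singleton, nsmul_eq_mul, Nat.cast_sub Fintype.card_pos]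
  simp

lemma sumone {X : Type*} [Fintype X] [DecidableEq X] (x₀ : X) (N : ℕ)
    (hN : Fintype.card X = N) (δ : ℝ) :
    ∑ x : X, (δ / (N : ℝ) + (1 - δ) * (if x = x₀ then 1 else 0)) = 1 := by
  haveI : Nonempty X := ⟨x₀⟩
  subst hN
  have hN0 : 0 < (Fintype.card X : ℝ) := by exact_mod_cast Fintype.card_pos
  rw [Finset.sum_add_distrib, Finset.sum_const, ← Finset.mul_sum, Finset.sum_ite_eq']
  simp only [Finset.mem_univ, if_true, mul_one, nsmul_eq_mul, Finset.card_univ]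
  field_simp
  ring

lemma marginal_eq (n m : ℕ) (hm : 0 < m) (δ : ℝ) (I : Finset (Fin n)) :
    marginal (n := n) (X := fun _ => Fin m)
      (fun z => δ / ((m ^ n : ℕ) : ℝ) + (1 - δ) * (if z = (fun _ => ⟨0, hm⟩) then 1 else 0)) I
    = fun x => δ / ((m ^ I.card : ℕ) : ℝ)
        + (1 - δ) * (if x = (fun _ => ⟨0, hm⟩) then 1 else 0) := by
  funext x
  have hkn : I.card ≤ n := by
    simpa using Finset.card_le_card (Finset.subset_univ I)
  have hcardY : Fintype.card (∀ j : {j : Fin n // j ∉ I}, Fin m) = m ^ (n - I.card) := by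
    rw [Fintype.card_pi, Finset.prod_const, Finset.card_univ, Fintype.card_fin,
      Fintype.card_subtype_compl]
    congr 1
    congr 1
    · simp [Fintype.card_fin]
    · simp [Fintype.card_coe]
  have key : ∀ y : ∀ j : {j : Fin n // j ∉ I}, Fin m,
      ((fun i => if h : i ∈ I then x ⟨i, h⟩ else y ⟨i, h⟩) = (fun _ => (⟨0, hm⟩ : Fin m)))
      ↔ ((x = fun _ => ⟨0, hm⟩) ∧ (y = fun _ => ⟨0, hm⟩)) := by
    intro y
    constructor
    · intro h
      constructor
      · funext j
        simpa [j.2] using congrFun h j.1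
      · funext j
        simpa [j.2] using congrFun h j.1
    · rintro ⟨hx, hy⟩
      funext i
      by_cases h : i ∈ I <;> simp [h, hx, hy]
  unfold marginal
  rw [Finset.sum_add_distrib, Finset.sum_const, ← Finset.mul_sum, Finset.card_univ, hcardY]
  have h2 : ∑ y : ∀ j : {j : Fin n // j ∉ I}, Fin m,
      (if (fun i => if h : i ∈ I then x ⟨i, h⟩ else y ⟨i, h⟩) = (fun _ => (⟨0, hm⟩ : Fin m))
        then (1:ℝ) else 0)
      = (if x = (fun _ => ⟨0, hm⟩) then (1:ℝ) else 0) := by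
    rw [Finset.sum_congr rfl (fun y _ => if_congr (key y) rfl rfl)]
    by_cases hx : x = fun _ => ⟨0, hm⟩
    · simp [hx]
    · simp [hx]
  rw [h2]
  have hm0 : (0:ℝ) < (m:ℝ) := by exact_mod_cast hm
  have hsplit : ((m ^ n : ℕ) : ℝ) = ((m ^ I.card : ℕ) : ℝ) * ((m ^ (n - I.card) : ℕ) : ℝ) := by
    push_cast
    rw [← pow_add, Nat.add_sub_cancel' hkn]
  have hK0 : (0:ℝ) < ((m ^ I.card : ℕ) : ℝ) := by positivity
  have hY0 : (0:ℝ) < ((m ^ (n - I.card) : ℕ) : ℝ) := by positivity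
  rw [nsmul_eq_mul, hsplit]
  congr 1
  field_simp

set_option maxHeartbeats 2000000 in
/-- For `0 < α < 1`, the vector `s·δ_{[n]}` is approximately α-entropic,
realized by a classical probability distribution. -/
theorem renyi_axis_full_classical (α : ℝ) (hα0 : 0 < α) (hα1 : α < 1)
    (n : ℕ) (hn : 1 ≤ n) (s ε : ℝ) (hs : 0 < s) (hε : 0 < ε) :
    ∃ (d : Fin n → ℕ) (P : (∀ i, Fin (d i)) → ℝ),
      IsProbDist P ∧
      |renyiH α (marginal P Finset.univ) - s| ≤ ε ∧
      ∀ I : Finset (Fin n), I.Nonempty → I ≠ Finset.univ →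
        renyiH α (marginal P I) ≤ ε := by
  have h1α : 0 < 1 - α := by linarith
  have hlog2 : 0 < Real.log 2 := Real.log_pos (by norm_num)
  set T : ℝ := (2:ℝ) ^ ((1 - α) * s) with hT
  have hT1 : 1 < T := by
    have := Real.rpow_lt_rpow_of_exponent_lt (by norm_num : (1:ℝ) < 2)
      (by positivity : (0:ℝ) < (1 - α) * s)
    simpa using this
  have hT0 : 0 < T := by linarith
  set D : ℝ := 2 * T / ((1 - α) * ε * Real.log 2) with hD
  have hD0 : 0 < D := by positivity
  -- choose a big real x, then m := ⌈x⌉₊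
  obtain ⟨x, hx1, hx2, hxD⟩ : ∃ x : ℝ, (2:ℝ) ≤ x ∧ (2:ℝ) ^ s ≤ x ∧ D ≤ x ^ (1 - α) := by
    have h1 := (tendsto_rpow_atTop h1α).eventually_ge_atTop D
    have h2 := Filter.eventually_ge_atTop ((2:ℝ) ^ s)
    have h3 := Filter.eventually_ge_atTop (2:ℝ)
    obtain ⟨x, hx⟩ := (h3.and (h2.and h1)).exists
    exact ⟨x, hx.1, hx.2.1, hx.2.2⟩
  have hx0 : (0:ℝ) ≤ x := by linarith
  set m : ℕ := ⌈x⌉₊ with hmdef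
  have hxm : x ≤ (m : ℝ) := Nat.le_ceil x
  have hm2R : (2:ℝ) ≤ (m : ℝ) := le_trans hx1 hxm
  have hm : 0 < m := by exact_mod_cast lt_of_lt_of_le (by norm_num : (0:ℝ) < 2) hm2R
  have hmD : D ≤ (m : ℝ) ^ (1 - α) :=
    le_trans hxD (Real.rpow_le_rpow hx0 hxm h1α.le)
  have hm2s : (2:ℝ) ^ s ≤ (m : ℝ) := le_trans hx2 hxm
  -- N = m ^ n
  have hNR : ((m ^ n : ℕ) : ℝ) = (m : ℝ) ^ n := by push_cast; ring
  have hNpos : (0:ℝ) < ((m ^ n : ℕ) : ℝ) := by positivity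
  have hmN : (m : ℝ) ≤ ((m ^ n : ℕ) : ℝ) := by
    rw [hNR]
    exact le_self_pow₀ (by linarith) (by omega)
  have hN2 : (2:ℝ) ≤ ((m ^ n : ℕ) : ℝ) := le_trans hm2R hmN
  have hN2s : (2:ℝ) ^ s ≤ ((m ^ n : ℕ) : ℝ) := le_trans hm2s hmN
  -- IVT to find δ
  set N : ℝ := ((m ^ n : ℕ) : ℝ) with hNdef
  set f : ℝ → ℝ := fun δ => (N - 1) * (δ / N) ^ α + (δ / N + (1 - δ)) ^ α with hf
  have hfc : ContinuousOn f (Set.Icc 0 1) := by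
    have c1 : Continuous fun δ : ℝ => (δ / N) ^ α :=
      (Real.continuous_rpow_const hα0.le).comp (continuous_id.div_const N)
    have c2 : Continuous fun δ : ℝ => (δ / N + (1 - δ)) ^ α :=
      (Real.continuous_rpow_const hα0.le).comp (by continuity)
    exact ((continuous_const.mul c1).add c2).continuousOn
  have hf0 : f 0 = 1 := by
    simp [hf, Real.zero_rpow hα0.ne']
  have hNα : (0:ℝ) < N ^ α := Real.rpow_pos_of_pos hNpos α
  have hf1 : f 1 = N ^ (1 - α) := by
    have h1 : ((1:ℝ) / N) ^ α = 1 / N ^ α := by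
      rw [Real.div_rpow (by norm_num) hNpos.le, Real.one_rpow]
    have h2 : N ^ (1 - α) = N / N ^ α := by
      rw [Real.rpow_sub hNpos, Real.rpow_one]
    show (N - 1) * ((1:ℝ) / N) ^ α + ((1:ℝ) / N + (1 - 1)) ^ α = N ^ (1 - α)
    rw [sub_self, add_zero, h1, h2]
    field_simp
    ring
  have hTle : T ≤ N ^ (1 - α) := by
    have h1 : T = ((2:ℝ) ^ s) ^ (1 - α) := by
      rw [hT, ← Real.rpow_mul (by norm_num), mul_comm]
    rw [h1]
    exact Real.rpow_le_rpow (by positivity) hN2s h1α.le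
  obtain ⟨δ, hδmem, hfδ⟩ : ∃ δ ∈ Set.Icc (0:ℝ) 1, f δ = T := by
    have h := intermediate_value_Icc (by norm_num : (0:ℝ) ≤ 1) hfc
    have hmem : T ∈ Set.Icc (f 0) (f 1) := by
      rw [hf0, hf1]; exact ⟨hT1.le, hTle⟩
    obtain ⟨δ, hδ, hδT⟩ := h hmem
    exact ⟨δ, hδ, hδT⟩
  obtain ⟨hδ0, hδ1⟩ := hδmem
  -- the distribution
  have hcardfun : Fintype.card (Fin n → Fin m) = m ^ n := by simp
  have hXcard : ∀ I : Finset (Fin n),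
      Fintype.card (∀ _ : {i : Fin n // i ∈ I}, Fin m) = m ^ I.card := by
    intro I
    rw [Fintype.card_pi, Finset.prod_const, Finset.card_univ, Fintype.card_fin]
    congr 1
    exact Fintype.card_coe I
  have hHI : ∀ I : Finset (Fin n),
      renyiH α (marginal (n := n) (X := fun _ => Fin m)
        (fun z => δ / ((m ^ n : ℕ) : ℝ) + (1 - δ) * (if z = (fun _ => ⟨0, hm⟩) then 1 else 0)) I)
      = (1 / (1 - α)) * Real.logb 2
          ((((m ^ I.card : ℕ) : ℝ) - 1) * (δ / ((m ^ I.card : ℕ) : ℝ)) ^ α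
            + (δ / ((m ^ I.card : ℕ) : ℝ) + (1 - δ)) ^ α) := by
    intro I
    rw [marginal_eq n m hm δ I, renyiH, powsum _ (m ^ I.card) (hXcard I)]
  refine ⟨fun _ => m,
    fun z => δ / ((m ^ n : ℕ) : ℝ) + (1 - δ) * (if z = (fun _ => ⟨0, hm⟩) then 1 else 0),
    ⟨?_, sumone _ (m ^ n) hcardfun δ⟩, ?_, ?_⟩
  · intro z
    have : (0:ℝ) ≤ (if z = (fun _ => ⟨0, hm⟩) then (1:ℝ) else 0) := by positivity
    have h2 : (0:ℝ) ≤ 1 - δ := by linarith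
    positivity
  · -- full entropy is exactly s
    have hcard : (Finset.univ : Finset (Fin n)).card = n := by simp
    rw [hHI Finset.univ, hcard, ← hNdef, show (N - 1) * (δ / N) ^ α + (δ / N + (1 - δ)) ^ α = f δ from rfl,
      hfδ, hT, Real.logb_rpow (by norm_num) (by norm_num)]
    have : (1 / (1 - α)) * ((1 - α) * s) = s := by field_simp
    rw [this]
    simp [abs_nonneg, le_of_lt hε]
  · -- proper subsets
    intro I hIne hIne2
    rw [hHI I]
    set K : ℝ := ((m ^ I.card : ℕ) : ℝ) with hKdef
    have hK1 : (1:ℝ) ≤ K := by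
      rw [hKdef]
      exact_mod_cast Nat.one_le_iff_ne_zero.mpr (pow_ne_zero _ (by omega))
    have hK0 : (0:ℝ) < K := by linarith
    have hkn : I.card < n := by
      have := Finset.card_lt_card (Finset.ssubset_univ_iff.mpr hIne2)
      simpa using this
    -- S bounds
    set S : ℝ := (K - 1) * (δ / K) ^ α + (δ / K + (1 - δ)) ^ α with hS
    clear_value T D N f S K
    have hbase0 : 0 ≤ δ / K := div_nonneg hδ0 hK0.le
    have hbase1 : δ / K ≤ 1 := by
      rw [div_le_one hK0]; linarith
    have hb2 : δ / K ≤ δ := div_le_self hδ0 hK1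
    have hbase2a : 0 ≤ δ / K + (1 - δ) := by linarith
    have hbase2b : δ / K + (1 - δ) ≤ 1 := by linarith
    have hS1 : 1 ≤ S := by
      have e1 : (K - 1) * (δ / K) ≤ (K - 1) * (δ / K) ^ α :=
        mul_le_mul_of_nonneg_left (aux_le_rpow hbase0 hbase1 hα0 hα1.le) (by linarith)
      have e2 : δ / K + (1 - δ) ≤ (δ / K + (1 - δ)) ^ α :=
        aux_le_rpow hbase2a hbase2b hα0 hα1.le
      have e3 : (K - 1) * (δ / K) + (δ / K + (1 - δ)) = 1 := by
        field_simp
        ring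
      have h := add_le_add e1 e2
      rw [e3] at h
      rw [hS]
      exact h
    have hS0 : 0 < S := by linarith
    -- upper bound on S
    have hKα : (0:ℝ) < K ^ α := Real.rpow_pos_of_pos hK0 α
    have hNα : (0:ℝ) < N ^ α := Real.rpow_pos_of_pos hNpos α
    have hδα : (0:ℝ) ≤ δ ^ α := Real.rpow_nonneg hδ0 α
    have idK : K ^ (1 - α) = K / K ^ α := by rw [Real.rpow_sub hK0, Real.rpow_one]
    have idN : N ^ (1 - α) = N / N ^ α := by rw [Real.rpow_sub hNpos, Real.rpow_one]
    have step1 : δ ^ α * N ^ (1 - α) ≤ 2 * T := by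
      have hA : (N - 1) * (δ / N) ^ α ≤ T := by
        have : (0:ℝ) ≤ (δ / N + (1 - δ)) ^ α := Real.rpow_nonneg (by
          have : δ / N ≤ δ := div_le_self hδ0 (by linarith)
          have : 0 ≤ δ / N := div_nonneg hδ0 hNpos.le
          linarith) α
        have := hfδ
        rw [hf] at this
        simp only at this
        linarith
      rw [Real.div_rpow hδ0 hNpos.le] at hA
      rw [idN]
      have hq : 0 ≤ δ ^ α / N ^ α := by positivity
      have h2N : N ≤ 2 * (N - 1) := by linarith
      calc δ ^ α * (N / N ^ α) = N * (δ ^ α / N ^ α) := by ring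
        _ ≤ 2 * (N - 1) * (δ ^ α / N ^ α) := mul_le_mul_of_nonneg_right h2N hq
        _ = 2 * ((N - 1) * (δ ^ α / N ^ α)) := by ring
        _ ≤ 2 * T := by linarith
    have hKmN : K * (m : ℝ) ≤ N := by
      have hnat : m ^ I.card * m ≤ m ^ n := by
        calc m ^ I.card * m = m ^ (I.card + 1) := (pow_succ m I.card).symm
          _ ≤ m ^ n := Nat.pow_le_pow_right hm (by omega)
      calc K * (m : ℝ) = ((m ^ I.card * m : ℕ) : ℝ) := by rw [hKdef]; push_cast; ring
        _ ≤ ((m ^ n : ℕ) : ℝ) := by exact_mod_cast hnat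
        _ = N := hNdef.symm
    have step2 : K ^ (1 - α) * (m : ℝ) ^ (1 - α) ≤ N ^ (1 - α) := by
      rw [← Real.mul_rpow hK0.le (Nat.cast_nonneg m)]
      exact Real.rpow_le_rpow (by positivity) hKmN h1α.le
    have hmα : (0:ℝ) < (m : ℝ) ^ (1 - α) := Real.rpow_pos_of_pos (by linarith) _
    have step3 : δ ^ α * K ^ (1 - α) ≤ 2 * T / (m : ℝ) ^ (1 - α) := by
      rw [le_div_iff₀ hmα]
      calc δ ^ α * K ^ (1 - α) * (m : ℝ) ^ (1 - α)
          = δ ^ α * (K ^ (1 - α) * (m : ℝ) ^ (1 - α)) := by ring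
        _ ≤ δ ^ α * N ^ (1 - α) := by
            apply mul_le_mul_of_nonneg_left step2 hδα
        _ ≤ 2 * T := step1
    have step4 : 2 * T / (m : ℝ) ^ (1 - α) ≤ (1 - α) * ε * Real.log 2 := by
      rw [div_le_iff₀ hmα]
      have hR : (0:ℝ) < (1 - α) * ε * Real.log 2 := by positivity
      have : (1 - α) * ε * Real.log 2 * D ≤ (1 - α) * ε * Real.log 2 * (m : ℝ) ^ (1 - α) :=
        mul_le_mul_of_nonneg_left hmD hR.le
      have hDval : (1 - α) * ε * Real.log 2 * D = 2 * T := by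
        rw [hD]; field_simp
      linarith
    have hSub : S ≤ 1 + (1 - α) * ε * Real.log 2 := by
      have hu : (0:ℝ) ≤ (δ / K) ^ α := Real.rpow_nonneg hbase0 α
      have e1 : (K - 1) * (δ / K) ^ α ≤ K * (δ / K) ^ α :=
        mul_le_mul_of_nonneg_right (by linarith) hu
      have e2 : (δ / K + (1 - δ)) ^ α ≤ 1 := Real.rpow_le_one hbase2a hbase2b hα0.le
      have e3 : K * (δ / K) ^ α = δ ^ α * K ^ (1 - α) := by
        rw [Real.div_rpow hδ0 hK0.le, idK]
        ring
      have h34 := step3.trans step4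
      rw [hS]
      calc (K - 1) * (δ / K) ^ α + (δ / K + (1 - δ)) ^ α
          ≤ K * (δ / K) ^ α + 1 := add_le_add e1 e2
        _ = δ ^ α * K ^ (1 - α) + 1 := by rw [e3]
        _ ≤ (1 - α) * ε * Real.log 2 + 1 := by linarith [h34]
        _ = 1 + (1 - α) * ε * Real.log 2 := by ring
    -- conclude
    have hlogS : Real.log S ≤ (1 - α) * ε * Real.log 2 :=
      le_trans (Real.log_le_sub_one_of_pos hS0) (by linarith)
    have hlogS0 : 0 ≤ Real.log S := Real.log_nonneg hS1
    rw [Real.logb]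
    have h1 : Real.log S / Real.log 2 ≤ ((1 - α) * ε * Real.log 2) / Real.log 2 :=
      (div_le_div_iff_of_pos_right hlog2).mpr hlogS
    have h2 : ((1 - α) * ε * Real.log 2) / Real.log 2 = (1 - α) * ε := by
      rw [mul_div_assoc, div_self hlog2.ne', mul_one]
    calc (1 / (1 - α)) * (Real.log S / Real.log 2)
        ≤ (1 / (1 - α)) * ((1 - α) * ε) := by
          rw [← h2]
          exact mul_le_mul_of_nonneg_left h1 (by positivity)
      _ = ε := by field_simp


end
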